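/- The big q-Hermite polynomials H_n(x|a,q) := ∑_{i=0}^n [n choose i]_q q^{binom(i,2)} (-a)^i H_{n-i}(x|q) satisfy the three-term recurrence x H_n(x|a,q) = H_{n+1}(x|a,q) + a q^n H_n(x|a,q) + [n]_q H_{n-1}(x|a,q) for n ≥ 0, with H_{-1}(x|a,q) = 0. -/
import Mathlib


noncomputable def qint (q : ℝ) (n : ℕ) : ℝ := ∑ i ∈ Finset.range n, q ^ i

noncomputable def qfact (q : ℝ) (n : ℕ) : ℝ := ∏ i ∈ Finset.range n, qint q (i + 1)

noncomputable def qPoch (a q : ℝ) (n : ℕ) : ℝ := ∏ i ∈ Finset.range n, (1 - a * q ^ i)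

/-- Gaussian binomial coefficient as a polynomial in `q`, via the Pascal-type recurrence. -/
noncomputable def qbinom (q : ℝ) : ℕ → ℕ → ℝ
  | _, 0 => 1
  | 0, _ + 1 => 0
  | n + 1, k + 1 => qbinom q n k + q ^ (k + 1) * qbinom q n (k + 1)

/-- Rescaled continuous q-Hermite polynomials `H_n(x|q)`. -/
noncomputable def qHermite (q x : ℝ) : ℕ → ℝ
  | 0 => 1
  | 1 => x
  | n + 2 => x * qHermite q x (n + 1) - qint q (n + 1) * qHermite q x n

/-- Chebyshev polynomials of the second kind. -/
noncomputable def Ucheb (x : ℝ) : ℕ → ℝ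
  | 0 => 1
  | 1 => 2 * x
  | n + 2 => 2 * x * Ucheb x (n + 1) - Ucheb x n

/-- Probabilist's Hermite polynomials. -/
noncomputable def He (x : ℝ) : ℕ → ℝ
  | 0 => 1
  | 1 => x
  | n + 2 => x * He x (n + 1) - (n + 1 : ℝ) * He x n

/-- Big q-Hermite polynomials `H_n(x|a,q)`. -/
noncomputable def bigH (q a x : ℝ) (n : ℕ) : ℝ :=
  ∑ i ∈ Finset.range (n + 1),
    qbinom q n i * q ^ (i.choose 2) * (-a) ^ i * qHermite q x (n - i)

/-- Al-Salam--Chihara polynomials `P_n(x|y,ρ,q)`. -/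
noncomputable def ASC (q x y ρ : ℝ) : ℕ → ℝ
  | 0 => 1
  | 1 => x - ρ * y
  | n + 2 =>
      (x - ρ * y * q ^ (n + 1)) * ASC q x y ρ (n + 1)
        - qint q (n + 1) * (1 - ρ ^ 2 * q ^ n) * ASC q x y ρ n

/-- Auxiliary polynomials `B_n(x|q)`. -/
noncomputable def Bpoly (q x : ℝ) : ℕ → ℝ
  | 0 => 1
  | 1 => -x
  | n + 2 => -q ^ (n + 1) * x * Bpoly q x (n + 1) + q ^ n * qint q (n + 1) * Bpoly q x n

lemma qbinom_zero_right (q : ℝ) (n : ℕ) : qbinom q n 0 = 1 := by cases n <;> rfl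
lemma qbinom_succ (q : ℝ) (n k : ℕ) : qbinom q (n+1) (k+1) = qbinom q n k + q ^ (k + 1) * qbinom q n (k + 1) := rfl
lemma qbinom_of_lt (q : ℝ) : ∀ n k, n < k → qbinom q n k = 0 := by
  intro n
  induction n with
  | zero => intro k hk; match k, hk with | k+1, _ => rfl
  | succ m ih =>
    intro k hk
    match k, hk with
    | k+1, hk =>
      rw [qbinom_succ, ih _ (by omega), ih _ (by omega)]; ring
lemma qint_succ (q : ℝ) (n : ℕ) : qint q (n+1) = qint q n + q^n := Finset.sum_range_succ _ _
lemma qint_zero (q : ℝ) : qint q 0 = 0 := by simp [qint]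

lemma qbinom_dual (q : ℝ) : ∀ n k, k ≤ n → qbinom q (n+1) (k+1) = q^(n-k) * qbinom q n k + qbinom q n (k+1) := by
  intro n
  induction n with
  | zero =>
    intro k hk; interval_cases k
    simp [qbinom_succ, qbinom_zero_right, qbinom_of_lt q 0 1 (by omega)]
  | succ m ih =>
    intro k hk
    match k with
    | 0 =>
      have P1 : qbinom q (m+2) 1 = qbinom q (m+1) 0 + q^1 * qbinom q (m+1) 1 := qbinom_succ q (m+1) 0
      have I1 : qbinom q (m+1) 1 = q^m * qbinom q m 0 + qbinom q m 1 := by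
        have := ih 0 (by omega); simpa using this
      have P2 : qbinom q (m+1) 1 = qbinom q m 0 + q^1 * qbinom q m 1 := qbinom_succ q m 0
      have e : m + 1 - 0 = m + 1 := by omega
      rw [e, qbinom_zero_right] at *
      linear_combination P1 + q * I1 - P2
    | k+1 =>
      rcases Nat.lt_or_ge k m with h | h
      · have P1 := qbinom_succ q (m+1) (k+1)
        have I1 : qbinom q (m+1) (k+1) = q^(m-k) * qbinom q m k + qbinom q m (k+1) := ih k (by omega)
        have I2 : qbinom q (m+1) (k+2) = q^(m-k-1) * qbinom q m (k+1) + qbinom q m (k+2) := by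
          have := ih (k+1) (by omega)
          rwa [show m - (k+1) = m - k - 1 by omega] at this
        have P2 := qbinom_succ q m k
        have P3 := qbinom_succ q m (k+1)
        have hp1 : q^(k+1+1) * q^(m-k-1) = q^(m+1) := by rw [← pow_add]; congr 1; omega
        have hp2 : q^(m-k) * q^(k+1) = q^(m+1) := by rw [← pow_add]; congr 1; omega
        rw [show m+1-(k+1) = m-k by omega]
        linear_combination P1 + I1 + q^(k+1+1) * I2 - q^(m-k) * P2 - P3 +
          qbinom q m (k+1) * (hp1 - hp2)
      · rw [show m+1-(k+1) = 0 by omega, qbinom_succ q (m+1) (k+1),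
          qbinom_of_lt q (m+1) (k+1+1) (by omega)]
        ring

lemma qint_mul_qbinom_aux (q : ℝ) : ∀ n k, qint q (n + 1 - k) * qbinom q (n+1) k = qint q (n+1) * qbinom q n k := by
  intro n
  induction n with
  | zero =>
    intro k
    match k with
    | 0 => rfl
    | 1 => rw [qbinom_of_lt q 0 1 (by omega), show (0+1-1 : ℕ) = 0 from rfl, qint_zero]; ring
    | k+2 => rw [qbinom_of_lt q 1 (k+2) (by omega), qbinom_of_lt q 0 (k+2) (by omega)]; ring
  | succ m ih =>
    intro k
    match k with
    | 0 => simp [qbinom_zero_right]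
    | k+1 =>
      rcases Nat.lt_or_ge m k with h | h
      · rcases Nat.lt_or_ge (m+1) k with h2 | h2
        · rw [qbinom_of_lt q (m+1+1) (k+1) (by omega), qbinom_of_lt q (m+1) (k+1) (by omega)]
          ring
        · have hk : k = m + 1 := by omega
          subst hk
          rw [show m+1+1-(m+1+1) = 0 by omega, qint_zero,
            qbinom_of_lt q (m+1) (m+1+1) (by omega)]
          ring
      · have A : qint q (m-k+1) * qbinom q (m+1) k = qint q (m+1) * qbinom q m k := by
          have := ih k; rwa [show m+1-k = m-k+1 by omega] at this
        have B : qint q (m-k) * qbinom q (m+1) (k+1) = qint q (m+1) * qbinom q m (k+1) := by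
          have := ih (k+1); rwa [show m+1-(k+1) = m-k by omega] at this
        have D := qbinom_succ q m k
        have C := qbinom_succ q (m+1) k
        have hpow : q^(k+1) * q^(m-k) = q^(m+1) := by rw [← pow_add]; congr 1; omega
        have E1 := qint_succ q (m-k)
        have E2 := qint_succ q (m+1)
        rw [show m+1+1-(k+1) = m-k+1 by omega]
        linear_combination qint q (m-k+1) * C + A + q^(k+1) * qbinom q (m+1) (k+1) * E1 +
          q^(k+1) * B + qbinom q (m+1) (k+1) * hpow - qint q (m+1) * D -
          qbinom q (m+1) (k+1) * E2

lemma qint_mul_qbinom (q : ℝ) (n k : ℕ) :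
    qint q (n - k) * qbinom q n k = qint q n * qbinom q (n-1) k := by
  cases n with
  | zero => simp [qint_zero]
  | succ m => exact qint_mul_qbinom_aux q m k

lemma qHermite_succ (q x : ℝ) (k : ℕ) :
    qHermite q x (k+1) = x * qHermite q x k - qint q k * qHermite q x (k-1) := by
  cases k with
  | zero => simp [qHermite, qint_zero]
  | succ m => rfl

lemma bigH_succ (q a x : ℝ) (n : ℕ) :
    bigH q a x (n + 1) = (x - a * q ^ n) * bigH q a x n - qint q n * bigH q a x (n - 1) := by
  have hs1 : bigH q a x (n+1)
      = (∑ i ∈ Finset.range (n+1),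
          qbinom q n i * q ^ (i.choose 2) * (-a) ^ i * qHermite q x (n + 1 - i))
        - a * q ^ n * bigH q a x n := by
    unfold bigH
    rw [Finset.sum_range_succ'
      (fun i => qbinom q (n+1) i * q ^ (i.choose 2) * (-a) ^ i * qHermite q x (n+1-i)) (n+1)]
    simp only [Nat.succ_sub_succ, Nat.sub_zero, show (0:ℕ).choose 2 = 0 from rfl, pow_zero,
      qbinom_zero_right, one_mul, mul_one]
    have step : ∀ i ∈ Finset.range (n+1),
        qbinom q (n+1) (i+1) * q ^ ((i+1).choose 2) * (-a) ^ (i+1) * qHermite q x (n - i)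
        = qbinom q n (i+1) * q ^ ((i+1).choose 2) * (-a) ^ (i+1) * qHermite q x (n - i)
          + (-(a * q ^ n)) * (qbinom q n i * q ^ (i.choose 2) * (-a) ^ i * qHermite q x (n - i)) := by
      intro i hi
      rw [Finset.mem_range] at hi
      rw [qbinom_dual q n i (by omega)]
      have hc : (i+1).choose 2 = i.choose 2 + i := by
        have h0 : (i+1).choose 2 = i.choose 1 + i.choose 2 := rfl
        rw [h0, Nat.choose_one_right]; omega
      have hpow : q ^ (n-i) * q ^ ((i+1).choose 2) = q ^ n * q ^ (i.choose 2) := by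
        rw [hc, ← pow_add, ← pow_add]; congr 1; omega
      have ha : (-a) ^ (i+1) = -a * (-a) ^ i := by ring
      calc (q ^ (n-i) * qbinom q n i + qbinom q n (i+1)) * q ^ ((i+1).choose 2) * (-a) ^ (i+1) *
            qHermite q x (n - i)
          = (q ^ (n-i) * q ^ ((i+1).choose 2)) * qbinom q n i * (-a) ^ (i+1) * qHermite q x (n - i)
            + qbinom q n (i+1) * q ^ ((i+1).choose 2) * (-a) ^ (i+1) * qHermite q x (n - i) := by
            ring
        _ = _ := by rw [hpow, ha]; ring
    rw [Finset.sum_congr rfl step, Finset.sum_add_distrib, ← Finset.mul_sum]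
    have hdrop : (∑ i ∈ Finset.range (n+1),
        qbinom q n (i+1) * q ^ ((i+1).choose 2) * (-a) ^ (i+1) * qHermite q x (n - i))
        + qHermite q x (n+1)
        = ∑ i ∈ Finset.range (n+1),
          qbinom q n i * q ^ (i.choose 2) * (-a) ^ i * qHermite q x (n + 1 - i) := by
      have h2 : (∑ i ∈ Finset.range (n+2),
          qbinom q n i * q ^ (i.choose 2) * (-a) ^ i * qHermite q x (n + 1 - i))
          = (∑ i ∈ Finset.range (n+1),
              qbinom q n (i+1) * q ^ ((i+1).choose 2) * (-a) ^ (i+1) * qHermite q x (n - i))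
            + qHermite q x (n+1) := by
        rw [Finset.sum_range_succ'
          (fun i => qbinom q n i * q ^ (i.choose 2) * (-a) ^ i * qHermite q x (n + 1 - i)) (n+1)]
        simp only [Nat.succ_sub_succ, Nat.sub_zero, show (0:ℕ).choose 2 = 0 from rfl, pow_zero,
          qbinom_zero_right, one_mul, mul_one]
      rw [← h2, Finset.sum_range_succ, qbinom_of_lt q n (n+1) (by omega)]
      ring
    rw [← hdrop]
    ring
  have hs2 : (∑ i ∈ Finset.range (n+1),
      qbinom q n i * q ^ (i.choose 2) * (-a) ^ i * qHermite q x (n + 1 - i))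
      = x * bigH q a x n - qint q n * bigH q a x (n-1) := by
    have step : ∀ i ∈ Finset.range (n+1),
        qbinom q n i * q ^ (i.choose 2) * (-a) ^ i * qHermite q x (n + 1 - i)
        = x * (qbinom q n i * q ^ (i.choose 2) * (-a) ^ i * qHermite q x (n - i))
          - qint q n * (qbinom q (n-1) i * q ^ (i.choose 2) * (-a) ^ i * qHermite q x (n - 1 - i)) := by
      intro i hi
      rw [Finset.mem_range] at hi
      rw [show n + 1 - i = (n - i) + 1 by omega, qHermite_succ q x (n-i),
        show n - i - 1 = n - 1 - i by omega]
      have := qint_mul_qbinom q n i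
      rw [show n - i = n - i from rfl] at this
      calc qbinom q n i * q ^ (i.choose 2) * (-a) ^ i *
            (x * qHermite q x (n - i) - qint q (n-i) * qHermite q x (n - 1 - i))
          = x * (qbinom q n i * q ^ (i.choose 2) * (-a) ^ i * qHermite q x (n - i))
            - (qint q (n-i) * qbinom q n i) * (q ^ (i.choose 2) * (-a) ^ i * qHermite q x (n - 1 - i)) := by
            ring
        _ = _ := by rw [this]; ring
    rw [Finset.sum_congr rfl step, Finset.sum_sub_distrib, ← Finset.mul_sum, ← Finset.mul_sum]
    have hB : (∑ i ∈ Finset.range (n+1),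
        qbinom q (n-1) i * q ^ (i.choose 2) * (-a) ^ i * qHermite q x (n - 1 - i))
        = bigH q a x (n-1) := by
      cases n with
      | zero => rfl
      | succ m =>
        rw [Finset.sum_range_succ, qbinom_of_lt q (m+1-1) (m+1) (by omega)]
        simp only [Nat.add_sub_cancel]
        rw [bigH]
        ring
    rw [hB]
    rfl
  rw [hs1, hs2]
  ring

theorem bigH_three_term (q a x : ℝ) (n : ℕ) :
    x * bigH q a x n =
      bigH q a x (n + 1) + a * q ^ n * bigH q a x n
        + qint q n * bigH q a x (n - 1) := by
  rw [bigH_succ]; ring
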